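/- Let d ≥ 2 and let G = (V,E) be a finite simple graph with at least d+1 vertices. Then a(G, ℓ∞^d) = max over all monochrome subgraph decompositions (G₁, …, G_d) ∈ M(G, ℓ∞^d) of min_{i ∈ {1,…,d}} a(G_i). -/

import Mathlib

open scoped Classical
open Matrix

noncomputable section

/-- The list of eigenvalues (roots of the characteristic polynomial, with multiplicity)
of a real matrix, sorted in nondecreasing order. -/
def sortedEigs {m : Type*} [Fintype m] [DecidableEq m] (A : Matrix m m ℝ) : List ℝ :=
  A.charpoly.roots.sort (· ≤ ·)

/-- `eigval A j` is the `j`-th smallest eigenvalue `λ_j(A)` (1-based, with multiplicity). -/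
def eigval {m : Type*} [Fintype m] [DecidableEq m] (A : Matrix m m ℝ) (j : ℕ) : ℝ :=
  (sortedEigs A).getD (j - 1) 0

variable {V : Type*} [Fintype V] [DecidableEq V]

/-- `p` is an ℓ∞-framework position for `G` (i.e. `p ∈ W(G, ℓ∞^d)`): along each edge the
difference of the endpoints is nonzero and has a unique coordinate of maximal absolute
value. -/
def IsLinfPos {d : ℕ} (G : SimpleGraph V) (p : V → Fin d → ℝ) : Prop :=
  ∀ ⦃v w : V⦄, G.Adj v w → p v ≠ p w ∧
    ∃ i : Fin d, ∀ j : Fin d, j ≠ i → |p v j - p w j| < |p v i - p w i|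

/-- The `i`-th monochrome subgraph of the framework `(G, p)` in `ℓ∞^d`: the spanning
subgraph of `G` whose edges are those on which the `i`-th coordinate of the difference of
the endpoints has maximal absolute value. -/
def mono {d : ℕ} (G : SimpleGraph V) (p : V → Fin d → ℝ) (i : Fin d) : SimpleGraph V where
  Adj v w := G.Adj v w ∧ ∀ j : Fin d, |p v j - p w j| ≤ |p v i - p w i|
  symm := by
    refine ⟨fun v w h => ?_⟩
    refine ⟨h.1.symm, fun j => ?_⟩
    rw [abs_sub_comm (p w j), abs_sub_comm (p w i)]
    exact h.2 j
  loopless := ⟨fun v h => G.irrefl h.1⟩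

/-- The rigidity matrix `R(G,p)` of a framework in `ℓ∞^d`, with rows indexed by edges and
columns indexed by vertex-coordinate pairs: the row of an edge `vw ∈ E_i` has entry
`sgn((p v − p w) i)` in column `(v, i)`, entry `−sgn((p v − p w) i) = sgn((p w − p v) i)`
in column `(w, i)`, and zeros elsewhere. -/
def rigidity {d : ℕ} (G : SimpleGraph V) (p : V → Fin d → ℝ) :
    Matrix G.edgeSet (V × Fin d) ℝ := fun e vi =>
  if h : vi.1 ∈ (e : Sym2 V) then
    if (mono G p vi.2).Adj vi.1 (Sym2.Mem.other h) then
      Real.sign (p vi.1 vi.2 - p (Sym2.Mem.other h) vi.2)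
    else 0
  else 0

/-- The framework Laplacian `L(G,p) = R(G,p)ᵀ R(G,p)` of a framework in `ℓ∞^d`. -/
def fLap {d : ℕ} (G : SimpleGraph V) (p : V → Fin d → ℝ) :
    Matrix (V × Fin d) (V × Fin d) ℝ :=
  (rigidity G p)ᵀ * rigidity G p

/-- The algebraic connectivity (Fiedler number) `a(H) = λ₂(L(H))` of a finite simple
graph. -/
def algConn (H : SimpleGraph V) : ℝ := eigval (H.lapMatrix ℝ) 2

/-- The algebraic connectivity of `G` in `ℓ∞^d`:
`a(G, ℓ∞^d) = sup { λ_{d+1}(L(G,p)) : p ∈ W(G, ℓ∞^d) }`. -/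
def algConnLinf (d : ℕ) (G : SimpleGraph V) : ℝ :=
  sSup {t : ℝ | ∃ p : V → Fin d → ℝ, IsLinfPos G p ∧ t = eigval (fLap G p) (d + 1)}

end

section AuxSection
set_option linter.unusedSectionVars false

namespace AuxCP
open Polynomial

variable {m o : Type*} [Fintype m] [DecidableEq m] [Fintype o] [DecidableEq o]

lemma charmatrix_blockDiagonal (M : o → Matrix m m ℝ) :
    charmatrix (blockDiagonal M) = blockDiagonal (fun i => charmatrix (M i)) := by
  ext ⟨v, i⟩ ⟨w, j⟩
  by_cases h : (v, i) = (w, j)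
  · obtain ⟨rfl, rfl⟩ := Prod.mk.injEq .. ▸ h
    simp [blockDiagonal_apply, charmatrix_apply_eq]
  · rw [charmatrix_apply_ne _ _ _ h]
    by_cases hij : i = j
    · subst hij
      have hvw : v ≠ w := fun hv => h (by rw [hv])
      simp [blockDiagonal_apply, charmatrix_apply_ne _ _ _ hvw]
    · simp [blockDiagonal_apply, hij]

lemma charpoly_blockDiagonal (M : o → Matrix m m ℝ) :
    (blockDiagonal M).charpoly = ∏ i, (M i).charpoly := by
  rw [Matrix.charpoly, charmatrix_blockDiagonal, det_blockDiagonal]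
  rfl

lemma charpoly_conj (P Q A : Matrix m m ℝ) (h1 : P * Q = 1) :
    (P * A * Q).charpoly = A.charpoly := by
  have hmap : ∀ X Y : Matrix m m ℝ, (X * Y).map (C : ℝ →+* ℝ[X]) = X.map C * Y.map C := by
    intro X Y; exact Matrix.map_mul
  have hone : (P.map (C : ℝ →+* ℝ[X])) * (Q.map C) = 1 := by
    rw [← hmap, h1]
    exact Matrix.map_one _ (map_zero C) (map_one C)
  have key : charmatrix (P * A * Q) = P.map C * charmatrix A * Q.map C := by
    unfold charmatrix
    rw [mul_sub, sub_mul]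
    congr 1
    · rw [scalar_apply, mul_assoc, ← smul_eq_diagonal_mul, Matrix.mul_smul, hone,
        smul_eq_diagonal_mul, mul_one]
    · simp only [RingHom.mapMatrix_apply]
      rw [hmap, hmap]
  have hdet : (P.map (C : ℝ →+* ℝ[X])).det * (Q.map C).det = 1 := by
    rw [← det_mul, hone, det_one]
  rw [Matrix.charpoly, key, det_mul, det_mul, Matrix.charpoly]
  calc (P.map (C : ℝ →+* ℝ[X])).det * (charmatrix A).det * (Q.map C).det
      = (charmatrix A).det * ((P.map C).det * (Q.map C).det) := by ring
    _ = (charmatrix A).det := by rw [hdet, mul_one]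

lemma charpoly_hermitian {A : Matrix m m ℝ} (hA : A.IsHermitian) :
    A.charpoly = ∏ i, (X - C (hA.eigenvalues i)) := by
  have hU := (Matrix.mem_unitaryGroup_iff).mp (hA.eigenvectorUnitary).2
  have hsp := hA.spectral_theorem
  have : A.charpoly = (diagonal (RCLike.ofReal ∘ hA.eigenvalues)).charpoly := by
    conv_lhs => rw [hsp]
    exact charpoly_conj _ _ _ hU
  rw [this]
  have hdiag : charmatrix (diagonal (RCLike.ofReal ∘ hA.eigenvalues) : Matrix m m ℝ)
      = diagonal (fun i => X - C (hA.eigenvalues i)) := by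
    ext v w
    by_cases h : v = w
    · subst h; simp [charmatrix_apply_eq]
    · simp [charmatrix_apply_ne _ _ _ h, diagonal_apply_ne _ h]
  rw [Matrix.charpoly, hdiag, det_diagonal]

lemma roots_charpoly_hermitian {A : Matrix m m ℝ} (hA : A.IsHermitian) :
    A.charpoly.roots = Finset.univ.val.map hA.eigenvalues := by
  rw [charpoly_hermitian hA]
  have : (∏ i, (X - C (hA.eigenvalues i)))
      = ((Finset.univ.val.map hA.eigenvalues).map fun a => X - C a).prod := by
    rw [Multiset.map_map]
    rfl
  rw [this, Polynomial.roots_multiset_prod_X_sub_C]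


variable {V : Type*} [Fintype V] [DecidableEq V]

lemma lap_isHermitian (H : SimpleGraph V) : (H.lapMatrix ℝ).IsHermitian :=
  (H.posSemidef_lapMatrix ℝ).isHermitian

lemma lap_roots_card (H : SimpleGraph V) :
    Multiset.card (H.lapMatrix ℝ).charpoly.roots = Fintype.card V := by
  rw [roots_charpoly_hermitian (lap_isHermitian H), Multiset.card_map]
  rfl

lemma lap_roots_nonneg (H : SimpleGraph V) {x : ℝ}
    (hx : x ∈ (H.lapMatrix ℝ).charpoly.roots) : 0 ≤ x := by
  rw [roots_charpoly_hermitian (lap_isHermitian H)] at hx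
  obtain ⟨i, _, rfl⟩ := Multiset.mem_map.mp hx
  exact (H.posSemidef_lapMatrix ℝ).eigenvalues_nonneg i

lemma lap_roots_zero_mem [Nonempty V] (H : SimpleGraph V) :
    (0 : ℝ) ∈ (H.lapMatrix ℝ).charpoly.roots := by
  have hdet : (H.lapMatrix ℝ).det = 0 := by
    rw [← Matrix.exists_mulVec_eq_zero_iff]
    refine ⟨fun _ => 1, ?_, H.lapMatrix_mulVec_const_eq_zero⟩
    intro h
    have := congrFun h (Classical.arbitrary V)
    simp at this
  rw [mem_roots ((H.lapMatrix ℝ).charpoly_monic.ne_zero)]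
  rw [Polynomial.IsRoot.def]
  have : Polynomial.eval 0 (H.lapMatrix ℝ).charpoly
      = ((charmatrix (H.lapMatrix ℝ)).map (Polynomial.evalRingHom (0:ℝ))).det := by
    rw [Matrix.charpoly]
    exact RingHom.map_det (Polynomial.evalRingHom (0:ℝ)) _
  rw [this]
  have hmap : (charmatrix (H.lapMatrix ℝ)).map (Polynomial.evalRingHom (0:ℝ))
      = - (H.lapMatrix ℝ) := by
    ext v w
    by_cases h : v = w
    · subst h; simp [charmatrix_apply_eq]
    · simp [charmatrix_apply_ne _ _ _ h]
  rw [hmap, Matrix.det_neg, hdet]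
  simp


lemma sorted_drop_le {l : List ℝ} (hl : l.Pairwise (· ≤ ·)) {k : ℕ} (hk : k < l.length) {y : ℝ}
    (hy : y ∈ l.drop k) : l[k] ≤ y := by
  obtain ⟨j, hj, rfl⟩ := List.mem_iff_getElem.mp hy
  rw [List.getElem_drop]
  exact hl.rel_get_of_le (by simp : (⟨k, hk⟩ : Fin l.length) ≤ ⟨k + j, by
    have := hj; rw [List.length_drop] at this; omega⟩)

lemma sorted_take_le {l : List ℝ} (hl : l.Pairwise (· ≤ ·)) {k : ℕ} (hk : k < l.length) {y : ℝ}
    (hy : y ∈ l.take (k+1)) : y ≤ l[k] := by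
  obtain ⟨j, hj, rfl⟩ := List.mem_iff_getElem.mp hy
  have hjl : j < l.length := by
    have := hj; rw [List.length_take] at this; omega
  rw [List.getElem_take]
  exact hl.rel_get_of_le (by
    have := hj; rw [List.length_take] at this
    exact Fin.mk_le_mk.mpr (by omega))

lemma filter_lt_length_le {l : List ℝ} {p : ℝ → Bool} {k : ℕ}
    (h : ∀ y ∈ l.drop k, ¬ p y) :
    (l.filter p).length ≤ k := by
  conv_lhs => rw [← List.take_append_drop k l]
  rw [List.filter_append, List.length_append]
  have h2 : (l.drop k).filter p = [] := by
    rw [List.filter_eq_nil_iff]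
    exact h
  rw [h2]
  simp only [List.length_nil, add_zero]
  exact le_trans (List.length_filter_le _ _) (by simp [List.length_take])

lemma le_filter_le_length {l : List ℝ} {p : ℝ → Bool} {k : ℕ} (hk : k ≤ l.length)
    (h : ∀ y ∈ l.take k, p y) :
    k ≤ (l.filter p).length := by
  have hsub : (l.take k).filter p = l.take k := by
    rw [List.filter_eq_self]
    exact h
  calc k = ((l.take k).filter p).length := by
        rw [hsub, List.length_take]; omega
    _ ≤ _ := ((List.take_sublist k l).filter _).length_le

lemma sorted_get_eq {l : List ℝ} (hl : l.Pairwise (· ≤ ·)) {k : ℕ} (hk : k < l.length) {x : ℝ}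
    (h1 : (l.filter (fun y => y < x)).length ≤ k)
    (h2 : k < (l.filter (fun y => y ≤ x)).length) : l[k] = x := by
  rcases lt_trichotomy l[k] x with h | h | h
  · exfalso
    have : k + 1 ≤ (l.filter (fun y => y < x)).length := by
      apply le_filter_le_length (by omega)
      intro y hy
      exact decide_eq_true (lt_of_le_of_lt (sorted_take_le hl hk hy) h)
    omega
  · exact h
  · exfalso
    have : (l.filter (fun y => y ≤ x)).length ≤ k := by
      apply filter_lt_length_le
      intro y hy
      simpa using not_le.mpr (lt_of_lt_of_le h (sorted_drop_le hl hk hy))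
    omega


variable {d : ℕ} {G : SimpleGraph V} {p : V → Fin d → ℝ}


variable {d : ℕ} {G : SimpleGraph V} {p : V → Fin d → ℝ}

lemma mono_adj_iff {i : Fin d} {v w : V} : (mono G p i).Adj v w ↔
    G.Adj v w ∧ ∀ j : Fin d, |p v j - p w j| ≤ |p v i - p w i| := Iff.rfl

/-- on a mono edge the i-th coordinate difference is nonzero -/
lemma mono_ne (hp : IsLinfPos G p) {i : Fin d} {v w : V}
    (h : (mono G p i).Adj v w) : p v i ≠ p w i := by
  obtain ⟨hne, -⟩ := hp (mono_adj_iff.mp h).1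
  intro heq
  apply hne
  funext j
  have hj := (mono_adj_iff.mp h).2 j
  rw [heq] at hj
  simp only [sub_self, abs_zero] at hj
  have : |p v j - p w j| = 0 := le_antisymm hj (abs_nonneg _)
  have := abs_eq_zero.mp this
  linarith [sub_eq_zero.mp this]

/-- the color of a mono edge is unique -/
lemma mono_unique (hp : IsLinfPos G p) {i j : Fin d} {v w : V}
    (hi : (mono G p i).Adj v w) (hj : (mono G p j).Adj v w) : i = j := by
  by_contra hne
  obtain ⟨-, i₀, hi₀⟩ := hp (mono_adj_iff.mp hi).1
  have key : ∀ k : Fin d, (mono G p k).Adj v w → k = i₀ := by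
    intro k hk
    by_contra hk0
    exact absurd ((mono_adj_iff.mp hk).2 i₀) (not_le.mpr (hi₀ k hk0))
  rw [key i hi, key j hj] at hne
  exact hne rfl

lemma sign_sq {a : ℝ} (ha : a ≠ 0) : Real.sign a * Real.sign a = 1 := by
  rcases ha.lt_or_gt with h | h
  · rw [Real.sign_of_neg h]; norm_num
  · rw [Real.sign_of_pos h]; norm_num

lemma sign_mul_sign_neg {a : ℝ} (ha : a ≠ 0) : Real.sign a * Real.sign (-a) = -1 := by
  rcases ha.lt_or_gt with h | h
  · rw [Real.sign_of_neg h, Real.sign_of_pos (by linarith : (0:ℝ) < -a)]; norm_num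
  · rw [Real.sign_of_pos h, Real.sign_of_neg (by linarith : -a < 0)]; norm_num

lemma rigidity_apply_of_eq {e : G.edgeSet} {v w : V} (i : Fin d) (hvw : v ≠ w)
    (he : (e : Sym2 V) = s(v, w)) :
    rigidity G p e (v, i) =
      if (mono G p i).Adj v w then Real.sign (p v i - p w i) else 0 := by
  have hv : v ∈ (e : Sym2 V) := by rw [he]; exact Sym2.mem_mk_left v w
  have hother : Sym2.Mem.other hv = w := by
    have h2 : s(v, Sym2.Mem.other hv) = s(v, w) := (Sym2.other_spec hv).trans he
    rcases Sym2.eq_iff.mp h2 with ⟨-, h⟩ | ⟨h1, h2⟩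
    · exact h
    · exact absurd h1 hvw
  unfold rigidity
  rw [dif_pos hv, hother]

lemma rigidity_apply_of_not_mem {e : G.edgeSet} {v : V} (i : Fin d)
    (hv : v ∉ (e : Sym2 V)) : rigidity G p e (v, i) = 0 := by
  unfold rigidity
  rw [dif_neg hv]


variable {d : ℕ} {G : SimpleGraph V} {p : V → Fin d → ℝ}

lemma rigidity_sq (hp : IsLinfPos G p) {e : G.edgeSet} {v : V} (i : Fin d) :
    rigidity G p e (v, i) * rigidity G p e (v, i)
      = if (e : Sym2 V) ∈ (mono G p i).incidenceSet v then 1 else 0 := by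
  by_cases hv : v ∈ (e : Sym2 V)
  · set w := Sym2.Mem.other hv with hw
    have hsp : s(v, w) = (e : Sym2 V) := Sym2.other_spec hv
    have hvw : v ≠ w := by
      intro h
      apply G.not_isDiag_of_mem_edgeSet e.2
      rw [← hsp, ← h]
      exact Sym2.mk_isDiag_iff.mpr rfl
    rw [rigidity_apply_of_eq i hvw hsp.symm]
    by_cases hadj : (mono G p i).Adj v w
    · rw [if_pos hadj, if_pos]
      · exact sign_sq (sub_ne_zero.mpr (mono_ne hp hadj))
      · refine ⟨?_, hv⟩
        rw [← hsp]
        exact (mono G p i).mem_edgeSet.mpr hadj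
    · rw [if_neg hadj, if_neg]
      · ring
      · intro hmem
        apply hadj
        apply (mono G p i).mem_edgeSet.mp
        rw [hsp]
        exact hmem.1
  · rw [rigidity_apply_of_not_mem i hv, if_neg (fun hmem => hv hmem.2)]
    ring


variable {d : ℕ} {G : SimpleGraph V} {p : V → Fin d → ℝ}

lemma rigidity_mul_eq_zero (hp : IsLinfPos G p) {i j : Fin d} (hij : i ≠ j)
    (e : G.edgeSet) (v w : V) :
    rigidity G p e (v, i) * rigidity G p e (w, j) = 0 := by
  by_cases hv : v ∈ (e : Sym2 V)
  swap
  · rw [rigidity_apply_of_not_mem i hv, zero_mul]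
  by_cases hw : w ∈ (e : Sym2 V)
  swap
  · rw [rigidity_apply_of_not_mem j hw, mul_zero]
  unfold rigidity
  rw [dif_pos hv, dif_pos hw]
  by_cases h1 : (mono G p i).Adj v (Sym2.Mem.other hv)
  swap
  · rw [if_neg h1, zero_mul]
  by_cases h2 : (mono G p j).Adj w (Sym2.Mem.other hw)
  swap
  · rw [if_neg h2, mul_zero]
  exfalso
  apply hij
  have h3 : s(v, Sym2.Mem.other hv) = s(w, Sym2.Mem.other hw) :=
    (Sym2.other_spec hv).trans (Sym2.other_spec hw).symm
  rcases Sym2.eq_iff.mp h3 with ⟨h4, h5⟩ | ⟨h4, h5⟩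
  · subst h4
    rw [← h5] at h2
    exact mono_unique hp h1 h2
  · subst h4
    rw [h5] at h1
    exact mono_unique hp h1 ((mono G p j).adj_symm h2)

lemma sum_edgeSet (g : Sym2 V → ℝ) :
    ∑ e : G.edgeSet, g e = ∑ z ∈ G.edgeFinset, g z :=
  (Finset.sum_subtype G.edgeFinset (fun z => SimpleGraph.mem_edgeFinset) g).symm

lemma fLap_eq_blockDiagonal (hp : IsLinfPos G p) :
    fLap G p = blockDiagonal (fun i => ((mono G p i).lapMatrix ℝ)) := by
  ext ⟨v, i⟩ ⟨w, j⟩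
  rw [fLap, Matrix.mul_apply]
  simp only [transpose_apply]
  by_cases hij : i = j
  · subst hij
    by_cases hvw : v = w
    · subst hvw
      -- diagonal entry: degree
      have hterm : ∀ e : G.edgeSet, rigidity G p e (v, i) * rigidity G p e (v, i)
          = if (e : Sym2 V) ∈ (mono G p i).incidenceSet v then 1 else 0 :=
        fun e => rigidity_sq hp i
      rw [Finset.sum_congr rfl (fun e _ => hterm e)]
      have : ∑ e : G.edgeSet, (if (e : Sym2 V) ∈ (mono G p i).incidenceSet v then (1:ℝ) else 0)
          = ∑ z ∈ G.edgeFinset, (if z ∈ (mono G p i).incidenceSet v then (1:ℝ) else 0) :=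
        sum_edgeSet (G := G) (fun z => if z ∈ (mono G p i).incidenceSet v then (1:ℝ) else 0)
      rw [this]
      have hsub : (mono G p i).incidenceFinset v ⊆ G.edgeFinset := by
        intro z hz
        rw [SimpleGraph.mem_incidenceFinset] at hz
        rw [SimpleGraph.mem_edgeFinset]
        have : (mono G p i).edgeSet ⊆ G.edgeSet := by
          rw [SimpleGraph.edgeSet_subset_edgeSet]
          exact fun a b hab => (mono_adj_iff.mp hab).1
        exact this hz.1
      have : ∑ z ∈ G.edgeFinset, (if z ∈ (mono G p i).incidenceSet v then (1:ℝ) else 0)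
          = ∑ z ∈ G.edgeFinset, (if z ∈ (mono G p i).incidenceFinset v then (1:ℝ) else 0) := by
        apply Finset.sum_congr rfl
        intro z _
        congr 1
        simp [SimpleGraph.mem_incidenceFinset]
      rw [this, Finset.sum_ite_mem, Finset.inter_eq_right.mpr hsub]
      simp only [Finset.sum_const, nsmul_eq_mul, mul_one]
      rw [SimpleGraph.card_incidenceFinset_eq_degree]
      rw [blockDiagonal_apply_eq]
      simp [SimpleGraph.lapMatrix, SimpleGraph.degMatrix]

    · -- off-diagonal same color
      have key : ∀ e : G.edgeSet, (e : Sym2 V) ≠ s(v, w) →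
          rigidity G p e (v, i) * rigidity G p e (w, i) = 0 := by
        intro e he
        by_cases hv : v ∈ (e : Sym2 V)
        swap
        · rw [rigidity_apply_of_not_mem i hv, zero_mul]
        by_cases hw : w ∈ (e : Sym2 V)
        swap
        · rw [rigidity_apply_of_not_mem i hw, mul_zero]
        exact absurd ((Sym2.mem_and_mem_iff hvw).mp ⟨hv, hw⟩) he
      rw [blockDiagonal_apply_eq]
      have hlap : (mono G p i).lapMatrix ℝ v w
          = if (mono G p i).Adj v w then (-1 : ℝ) else 0 := by
        have h0 : (SimpleGraph.degMatrix ℝ (mono G p i)) v w = 0 := by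
          simp [SimpleGraph.degMatrix, Matrix.diagonal_apply_ne _ hvw]
        rw [SimpleGraph.lapMatrix, Matrix.sub_apply, h0, SimpleGraph.adjMatrix_apply, zero_sub]
        split_ifs <;> norm_num
      rw [hlap]
      by_cases hadj : G.Adj v w
      · rw [Finset.sum_eq_single_of_mem (⟨s(v, w), hadj⟩ : G.edgeSet) (Finset.mem_univ _)
          (fun e _ hne => key e (fun hc => hne (Subtype.ext hc)))]
        rw [rigidity_apply_of_eq i hvw rfl,
          rigidity_apply_of_eq i (Ne.symm hvw) (Sym2.eq_swap : s(v,w) = s(w,v))]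
        by_cases hmadj : (mono G p i).Adj v w
        · rw [if_pos hmadj, if_pos ((mono G p i).adj_symm hmadj), if_pos hmadj]
          have : p w i - p v i = -(p v i - p w i) := by ring
          rw [this]
          exact sign_mul_sign_neg (sub_ne_zero.mpr (mono_ne hp hmadj))
        · rw [if_neg hmadj, if_neg (fun hc => hmadj ((mono G p i).adj_symm hc)), zero_mul,
            if_neg hmadj]
      · have hmadj : ¬ (mono G p i).Adj v w := fun hc => hadj (mono_adj_iff.mp hc).1
        rw [if_neg hmadj]
        apply Finset.sum_eq_zero
        intro e _
        apply key
        intro hc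
        exact hadj (G.mem_edgeSet.mp (hc ▸ e.2))
  · -- different colors: zero
    rw [Finset.sum_congr rfl (fun e _ => rigidity_mul_eq_zero hp hij e v w)]
    rw [blockDiagonal_apply_ne _ _ _ hij]
    simp


end AuxCP
end AuxSection


section GlueSection
set_option linter.unusedSectionVars false
namespace AuxCP
open Polynomial

variable {V : Type*} [Fintype V] [DecidableEq V]
variable {d : ℕ} {G : SimpleGraph V} {p : V → Fin d → ℝ}

lemma card_filter_bind {ι : Type*} (s : Multiset ι) (f : ι → Multiset ℝ)
    (q : ℝ → Prop) [DecidablePred q] :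
    Multiset.card ((s.bind f).filter q)
      = (s.map (fun i => Multiset.card ((f i).filter q))).sum := by
  induction s using Multiset.induction with
  | empty => simp
  | cons a s ih => simp [Multiset.cons_bind, Multiset.filter_add, ih]

lemma length_filter_sort (T : Multiset ℝ) (q : ℝ → Prop) [DecidablePred q] :
    ((T.sort (· ≤ ·)).filter (fun y => decide (q y))).length
      = Multiset.card (T.filter q) := by
  conv_rhs => rw [← Multiset.sort_eq T (· ≤ ·)]
  rw [Multiset.filter_coe]
  simp

lemma eigval_fLap (hd : 1 ≤ d) (hV : 2 ≤ Fintype.card V) (hp : IsLinfPos G p) :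
    eigval (fLap G p) (d + 1) = ⨅ i : Fin d, algConn (mono G p i) := by
  have hne : Nonempty V := Fintype.card_pos_iff.mp (by omega)
  have hnefin : Nonempty (Fin d) := ⟨⟨0, by omega⟩⟩
  set n := Fintype.card V with hn
  set f : Fin d → ℝ := fun i => algConn (mono G p i) with hf
  set s : Fin d → List ℝ := fun i => sortedEigs ((mono G p i).lapMatrix ℝ) with hs
  have hssorted : ∀ i, (s i).Pairwise (· ≤ ·) := fun i => Multiset.pairwise_sort _ _
  have hslen : ∀ i, (s i).length = n := by
    intro i
    rw [hs]
    simp only [sortedEigs]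
    rw [Multiset.length_sort, lap_roots_card]
  have hlen1 : ∀ i, 1 < (s i).length := by intro i; rw [hslen]; omega
  have hfi : ∀ i, f i = (s i)[1]'(hlen1 i) := by
    intro i
    simp only [hf, algConn, eigval, hs]
    rw [List.getD_eq_getElem _ _ (by rw [hslen i]; omega)]
  have hmem_roots : ∀ i (x : ℝ), x ∈ s i → x ∈ ((mono G p i).lapMatrix ℝ).charpoly.roots :=
    fun i x hx => (Multiset.mem_sort _).mp hx
  have hf_nonneg : ∀ i, 0 ≤ f i := by
    intro i
    rw [hfi i]
    exact lap_roots_nonneg _ (hmem_roots i _ (List.getElem_mem _))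
  obtain ⟨i₀, -, hi₀⟩ := Finset.exists_min_image Finset.univ f ⟨Classical.arbitrary _,
    Finset.mem_univ _⟩
  have hi₀' : ∀ i, f i₀ ≤ f i := fun i => hi₀ i (Finset.mem_univ i)
  have hbdd : BddBelow (Set.range f) := Set.Finite.bddBelow (Set.finite_range f)
  have hm : (⨅ i, f i) = f i₀ := le_antisymm (ciInf_le hbdd i₀) (le_ciInf hi₀')
  set m := f i₀ with hmdef
  have hm0 : 0 ≤ m := hf_nonneg i₀
  -- the roots of the framework Laplacian
  have hprodne : (∏ i : Fin d, ((mono G p i).lapMatrix ℝ).charpoly) ≠ 0 := by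
    apply Finset.prod_ne_zero_iff.mpr
    exact fun i _ => (Matrix.charpoly_monic _).ne_zero
  have hroots : (fLap G p).charpoly.roots
      = Finset.univ.val.bind (fun i : Fin d => ((mono G p i).lapMatrix ℝ).charpoly.roots) := by
    rw [fLap_eq_blockDiagonal hp, charpoly_blockDiagonal]
    exact Polynomial.roots_prod _ _ hprodne
  set l : List ℝ := sortedEigs (fLap G p) with hl
  have hlsort : l.Pairwise (· ≤ ·) := Multiset.pairwise_sort _ _
  have hllen : l.length = d * n := by
    rw [hl]
    simp only [sortedEigs]
    rw [Multiset.length_sort, hroots, Multiset.card_bind]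
    have : ∀ i : Fin d, (Multiset.card ∘ fun i : Fin d =>
        ((mono G p i).lapMatrix ℝ).charpoly.roots) i = n := fun i => lap_roots_card _
    rw [Multiset.map_congr rfl (fun i _ => this i)]
    simp [Multiset.map_const', mul_comm]
  have hdl : d < l.length := by
    rw [hllen]
    calc d = d * 1 := (mul_one d).symm
      _ < d * n := (Nat.mul_lt_mul_left (by omega)).mpr (by omega)
  -- count elements < m
  have hcount_lt : ∀ i : Fin d,
      Multiset.card ((((mono G p i).lapMatrix ℝ).charpoly.roots).filter (fun y => y < m)) ≤ 1 := by
    intro i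
    have : ((((mono G p i).lapMatrix ℝ).charpoly.roots).filter (fun y => y < m))
        = Multiset.filter (fun y => y < m) ((s i : List ℝ) : Multiset ℝ) := by
      rw [hs]
      simp only [sortedEigs]
      rw [Multiset.sort_eq]
    rw [this, Multiset.filter_coe, Multiset.coe_card]
    apply filter_lt_length_le (k := 1)
    intro y hy
    have h1 : (s i)[1]'(hlen1 i) ≤ y := sorted_drop_le (hssorted i) (hlen1 i) hy
    have h2 : m ≤ (s i)[1]'(hlen1 i) := (hfi i) ▸ hi₀' i
    simp only [decide_eq_true_eq]
    exact not_lt.mpr (le_trans h2 h1)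
  have hcount_le : ∀ i : Fin d, 1 ≤
      Multiset.card ((((mono G p i).lapMatrix ℝ).charpoly.roots).filter (fun y => y ≤ m)) := by
    intro i
    have hmem : (0:ℝ) ∈ (((mono G p i).lapMatrix ℝ).charpoly.roots).filter (fun y => y ≤ m) :=
      Multiset.mem_filter.mpr ⟨lap_roots_zero_mem _, hm0⟩
    exact Multiset.card_pos.mpr (fun hc => absurd (hc ▸ hmem) (Multiset.notMem_zero _))
  have hcount_le₀ : 2 ≤
      Multiset.card ((((mono G p i₀).lapMatrix ℝ).charpoly.roots).filter (fun y => y ≤ m)) := by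
    have heq : ((((mono G p i₀).lapMatrix ℝ).charpoly.roots).filter (fun y => y ≤ m))
        = Multiset.filter (fun y => y ≤ m) ((s i₀ : List ℝ) : Multiset ℝ) := by
      rw [hs]; simp only [sortedEigs]; rw [Multiset.sort_eq]
    rw [heq, Multiset.filter_coe, Multiset.coe_card]
    apply le_filter_le_length (by rw [hslen]; omega)
    intro y hy
    have : y ≤ (s i₀)[1]'(hlen1 i₀) := sorted_take_le (hssorted i₀) (hlen1 i₀) hy
    simp only [decide_eq_true_eq]
    rw [hmdef, hfi i₀]
    exact this
  -- final computation
  have key := sorted_get_eq hlsort hdl (x := m) ?_ ?_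
  · rw [hm]
    simp only [eigval, Nat.add_sub_cancel]
    rw [← hl, List.getD_eq_getElem _ _ hdl]
    exact key
  · -- filter < m
    have hconv : (l.filter (fun y => decide (y < m))).length
        = Multiset.card (((fLap G p).charpoly.roots).filter (fun y => y < m)) := by
      rw [hl]
      exact length_filter_sort _ _
    rw [hconv, hroots, card_filter_bind]
    calc (Finset.univ.val.map (fun i : Fin d => Multiset.card
          ((((mono G p i).lapMatrix ℝ).charpoly.roots).filter (fun y => y < m)))).sum
        = ∑ i : Fin d, Multiset.card
            ((((mono G p i).lapMatrix ℝ).charpoly.roots).filter (fun y => y < m)) := rfl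
      _ ≤ ∑ _i : Fin d, 1 := Finset.sum_le_sum (fun i _ => hcount_lt i)
      _ = d := by simp
  · -- filter ≤ m
    have hconv : (l.filter (fun y => decide (y ≤ m))).length
        = Multiset.card (((fLap G p).charpoly.roots).filter (fun y => y ≤ m)) := by
      rw [hl]
      exact length_filter_sort _ _
    rw [hconv, hroots, card_filter_bind]
    have hsum : (Finset.univ.val.map (fun i : Fin d => Multiset.card
          ((((mono G p i).lapMatrix ℝ).charpoly.roots).filter (fun y => y ≤ m)))).sum
        = ∑ i : Fin d, Multiset.card
            ((((mono G p i).lapMatrix ℝ).charpoly.roots).filter (fun y => y ≤ m)) := rfl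
    rw [hsum, ← Finset.add_sum_erase _ _ (Finset.mem_univ i₀)]
    have h2 : (Finset.univ.erase i₀).card • 1 ≤ ∑ i ∈ Finset.univ.erase i₀, Multiset.card
        ((((mono G p i).lapMatrix ℝ).charpoly.roots).filter (fun y => y ≤ m)) :=
      Finset.card_nsmul_le_sum _ _ _ (fun i _ => hcount_le i)
    have h3 : (Finset.univ.erase i₀).card = d - 1 := by
      rw [Finset.card_erase_of_mem (Finset.mem_univ i₀)]
      simp
    rw [h3] at h2
    simp only [smul_eq_mul, mul_one] at h2
    omega

end AuxCP
end GlueSection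

/-- For `d ≥ 2` and a finite simple graph `G` with at least `d+1` vertices, the algebraic
connectivity of `G` in `ℓ∞^d` equals the maximum over all monochrome subgraph
decompositions `(G₁, …, G_d) ∈ M(G, ℓ∞^d)` of `min_{i} a(Gᵢ)`. -/
theorem algConnLinf_eq_max_min {V : Type*} [Fintype V] [DecidableEq V] {d : ℕ}
    (hd : 2 ≤ d) (G : SimpleGraph V) (hV : d + 1 ≤ Fintype.card V) :
    IsGreatest
      {t : ℝ | ∃ p : V → Fin d → ℝ, IsLinfPos G p ∧
        t = ⨅ i : Fin d, algConn (mono G p i)}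
      (algConnLinf d G) := by
  classical
  have hcard : 2 ≤ Fintype.card V := by omega
  have hd1 : 1 ≤ d := by omega
  -- the two defining sets coincide
  have hTS : {t : ℝ | ∃ p : V → Fin d → ℝ, IsLinfPos G p ∧ t = eigval (fLap G p) (d + 1)}
      = {t : ℝ | ∃ p : V → Fin d → ℝ, IsLinfPos G p ∧
          t = ⨅ i : Fin d, algConn (mono G p i)} := by
    ext t
    simp only [Set.mem_setOf_eq]
    constructor
    · rintro ⟨p, hp, rfl⟩
      exact ⟨p, hp, AuxCP.eigval_fLap hd1 hcard hp⟩
    · rintro ⟨p, hp, rfl⟩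
      exact ⟨p, hp, (AuxCP.eigval_fLap hd1 hcard hp).symm⟩
  -- existence of a position
  have hexists : ∃ p : V → Fin d → ℝ, IsLinfPos G p := by
    refine ⟨fun v i => if i = (⟨0, by omega⟩ : Fin d) then ((Fintype.equivFin V v : ℕ) : ℝ)
      else 0, ?_⟩
    intro v w hvw
    have hvne : v ≠ w := hvw.ne
    have hcne : ((Fintype.equivFin V v : ℕ) : ℝ) ≠ ((Fintype.equivFin V w : ℕ) : ℝ) := by
      intro h
      exact hvne ((Fintype.equivFin V).injective (Fin.val_injective (Nat.cast_injective h)))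
    constructor
    · intro hpq
      apply hcne
      have := congrFun hpq (⟨0, by omega⟩ : Fin d)
      simpa using this
    · refine ⟨(⟨0, by omega⟩ : Fin d), fun j hj => ?_⟩
      beta_reduce
      rw [if_neg hj, if_pos rfl, if_neg hj, if_pos rfl]
      simp only [sub_self, abs_zero, sub_zero]
      exact abs_pos.mpr (sub_ne_zero.mpr hcne)
  -- the set is finite and nonempty
  haveI : Finite (SimpleGraph V) :=
    Finite.of_injective (fun H => H.Adj) (fun a b h => SimpleGraph.ext h)
  have hfin : Set.Finite {t : ℝ | ∃ p : V → Fin d → ℝ, IsLinfPos G p ∧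
      t = ⨅ i : Fin d, algConn (mono G p i)} := by
    apply Set.Finite.subset
      (Set.finite_range (fun c : Fin d → SimpleGraph V => ⨅ i : Fin d, algConn (c i)))
    rintro t ⟨p, hp, rfl⟩
    exact ⟨fun i => mono G p i, rfl⟩
  have hne : Set.Nonempty {t : ℝ | ∃ p : V → Fin d → ℝ, IsLinfPos G p ∧
      t = ⨅ i : Fin d, algConn (mono G p i)} := by
    obtain ⟨p, hp⟩ := hexists
    exact ⟨_, ⟨p, hp, rfl⟩⟩
  have hSup : algConnLinf d G
      = sSup {t : ℝ | ∃ p : V → Fin d → ℝ, IsLinfPos G p ∧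
          t = ⨅ i : Fin d, algConn (mono G p i)} := by
    rw [algConnLinf, hTS]
  rw [hSup]
  exact ⟨hne.csSup_mem hfin, fun t ht => le_csSup hfin.bddAbove ht⟩
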